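/- Let A be an infinite dimensional simple separable unital C*-algebra, and let α : G → Aut(A) be an action of a finite group G with the tracial Rokhlin property. Then either A has Property (SP) or α has the strict Rokhlin property. -/

import Mathlib

open Matrix
open scoped ComplexOrder

noncomputable section

/-- A projection in a `*`-algebra: a selfadjoint idempotent. -/
def IsProjectionElem {A : Type*} [Mul A] [Star A] (p : A) : Prop :=
  star p = p ∧ p * p = p

/-- Murray-von Neumann equivalence of projections. -/
def MvNEquiv {A : Type*} [Mul A] [Star A] (p q : A) : Prop :=
  ∃ v : A, star v * v = p ∧ v * star v = q

/-- `p` is Murray-von Neumann equivalent to a subprojection of `q`. -/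
def MvNSubEquiv {A : Type*} [Mul A] [Star A] (p q : A) : Prop :=
  ∃ v : A, star v * v = p ∧ q * (v * star v) = v * star v

/-- The hereditary subalgebra generated by `x`: the closure of `x A x`. -/
def herSub {A : Type*} [Mul A] [TopologicalSpace A] (x : A) : Set A :=
  closure {y : A | ∃ a : A, y = x * a * x}

/-- `p` is Murray-von Neumann equivalent to a projection in the hereditary
subalgebra generated by `x`. -/
def MvNInHer {A : Type*} [Mul A] [Star A] [TopologicalSpace A] (p x : A) : Prop :=
  ∃ q : A, IsProjectionElem q ∧ q ∈ herSub x ∧ MvNEquiv p q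

/-- A hereditary subalgebra: a closed `*`-subalgebra `B` such that whenever
`0 ≤ a ≤ b` and `b ∈ B`, also `a ∈ B` (positivity expressed via squares). -/
def IsHerSub {A : Type*} [NonUnitalNonAssocRing A] [Star A] [SMul ℂ A] [TopologicalSpace A]
    (B : Set A) : Prop :=
  IsClosed B ∧ (0 : A) ∈ B ∧ (∀ x ∈ B, ∀ y ∈ B, x + y ∈ B) ∧
    (∀ x ∈ B, ∀ y ∈ B, x * y ∈ B) ∧ (∀ (c : ℂ), ∀ x ∈ B, c • x ∈ B) ∧
    (∀ x ∈ B, star x ∈ B) ∧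
    (∀ a b : A, (∃ z : A, a = star z * z) → (∃ z : A, b - a = star z * z) → b ∈ B → a ∈ B)

/-- Property (SP): every nonzero hereditary subalgebra contains a nonzero projection. -/
def PropertySP (A : Type*) [NonUnitalNonAssocRing A] [Star A] [SMul ℂ A] [TopologicalSpace A] :
    Prop :=
  ∀ B : Set A, IsHerSub B → (∃ b ∈ B, b ≠ 0) → ∃ p ∈ B, IsProjectionElem p ∧ p ≠ 0

/-- Simplicity of a C*-algebra: it is nonzero and has no nontrivial closed
two-sided ideals. -/
def IsSimpleCStarAlgebra (A : Type*) [NonUnitalNonAssocRing A] [TopologicalSpace A] : Prop :=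
  (∃ a : A, a ≠ 0) ∧
    ∀ I : TwoSidedIdeal A, IsClosed (I : Set A) → (I : Set A) = {0} ∨ (I : Set A) = Set.univ

section Rokhlin

variable {G : Type*} [Group G] [Fintype G] {A : Type*} [CStarAlgebra A]
  [PartialOrder A] [StarOrderedRing A]

/-- The tracial Rokhlin property for an action of a finite group `G`. -/
def TracialRokhlin (α : G → A ≃⋆ₐ[ℂ] A) : Prop :=
  ∀ (F : Finset A) (ε : ℝ), 0 < ε → ∀ x : A, 0 ≤ x → ‖x‖ = 1 →
    ∃ e : G → A, (∀ g, IsProjectionElem (e g)) ∧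
      (∀ g h, g ≠ h → e g * e h = 0) ∧
      (∀ g h, ‖α g (e h) - e (g * h)‖ < ε) ∧
      (∀ g, ∀ a ∈ F, ‖e g * a - a * e g‖ < ε) ∧
      MvNInHer (1 - ∑ g : G, e g) x ∧
      1 - ε < ‖(∑ g : G, e g) * x * (∑ g : G, e g)‖

/-- The strict Rokhlin property for an action of a finite group `G`. -/
def StrictRokhlin (α : G → A ≃⋆ₐ[ℂ] A) : Prop :=
  ∀ (F : Finset A) (ε : ℝ), 0 < ε →
    ∃ e : G → A, (∀ g, IsProjectionElem (e g)) ∧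
      (∀ g h, g ≠ h → e g * e h = 0) ∧
      (∀ g h, ‖α g (e h) - e (g * h)‖ < ε) ∧
      (∀ g, ∀ a ∈ F, ‖e g * a - a * e g‖ < ε) ∧
      (∑ g : G, e g) = 1

end Rokhlin


section Aux

variable {A : Type*} [CStarAlgebra A] [PartialOrder A] [StarOrderedRing A]

/-- In a C*-algebra, every nonnegative element is of the form `star z * z`. -/
lemma exists_star_mul_self_of_nonneg {a : A} (ha : 0 ≤ a) : ∃ z : A, a = star z * z := by
  refine ⟨CFC.sqrt a, ?_⟩
  rw [(IsSelfAdjoint.of_nonneg (CFC.sqrt_nonneg a)).star_eq, CFC.sqrt_mul_sqrt_self a ha]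

/-- Conjugation by a nonnegative element of a hereditary subalgebra of nonnegative
elements lands in the subalgebra. -/
lemma conj_nonneg_mem {B : Set A} (hB : IsHerSub B) {x : A} (hx : x ∈ B) (hx0 : 0 ≤ x)
    {p : A} (hp : 0 ≤ p) : x * p * x ∈ B := by
  obtain ⟨hBc, hB0, hBadd, hBmul, hBsmul, hBstar, hBher⟩ := hB
  have hxsa : star x = x := (IsSelfAdjoint.of_nonneg hx0).star_eq
  have hpsa : IsSelfAdjoint p := IsSelfAdjoint.of_nonneg hp
  refine hBher (x * p * x) (((‖p‖ : ℂ)) • (x * x)) ?_ ?_ ?_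
  · obtain ⟨z, hz⟩ := exists_star_mul_self_of_nonneg hp
    refine ⟨z * x, ?_⟩
    rw [StarMul.star_mul, hxsa, hz]
    simp [mul_assoc]
  · have hle : p ≤ algebraMap ℝ A ‖p‖ := hpsa.le_algebraMap_norm_self
    obtain ⟨z, hz⟩ := exists_star_mul_self_of_nonneg (sub_nonneg.mpr hle)
    refine ⟨z * x, ?_⟩
    have h1 : ((‖p‖ : ℂ)) • (x * x) - x * p * x = x * (algebraMap ℝ A ‖p‖ - p) * x := by
      have : ((‖p‖ : ℂ)) • (x * x) = x * algebraMap ℝ A ‖p‖ * x := by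
        rw [Algebra.algebraMap_eq_smul_one]
        simp [mul_smul_comm, smul_mul_assoc, mul_assoc, Complex.coe_smul]
      rw [this, mul_sub, sub_mul]
    rw [h1, StarMul.star_mul, hxsa, hz]
    simp [mul_assoc]
  · exact hBsmul _ _ (hBmul _ hx _ hx)

/-- Conjugation by a nonnegative element of a hereditary subalgebra by an arbitrary
element lands in the subalgebra. -/
lemma conj_mem {B : Set A} (hB : IsHerSub B) {x : A} (hx : x ∈ B) (hx0 : 0 ≤ x)
    (a : A) : x * a * x ∈ B := by
  obtain ⟨hBc, hB0, hBadd, hBmul, hBsmul, hBstar, hBher⟩ := hB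
  -- first: selfadjoint case
  have hsa : ∀ s : A, IsSelfAdjoint s → x * s * x ∈ B := by
    intro s hs
    have h1 : (0 : A) ≤ algebraMap ℝ A ‖s‖ + s := by
      have := (hs.neg).le_algebraMap_norm_self
      rw [norm_neg] at this
      simpa [add_comm] using add_le_add_right this s
    have h2 : (0 : A) ≤ algebraMap ℝ A ‖s‖ - s := sub_nonneg.mpr hs.le_algebraMap_norm_self
    have hmem1 := conj_nonneg_mem ⟨hBc, hB0, hBadd, hBmul, hBsmul, hBstar, hBher⟩ hx hx0 h1
    have hmem2 := conj_nonneg_mem ⟨hBc, hB0, hBadd, hBmul, hBsmul, hBstar, hBher⟩ hx hx0 h2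
    have key : x * s * x = ((1/2 : ℂ)) • (x * (algebraMap ℝ A ‖s‖ + s) * x
        + (-1 : ℂ) • (x * (algebraMap ℝ A ‖s‖ - s) * x)) := by
      have h3 : x * (algebraMap ℝ A ‖s‖ + s) * x + (-1 : ℂ) • (x * (algebraMap ℝ A ‖s‖ - s) * x)
          = (2 : ℂ) • (x * s * x) := by
        rw [neg_one_smul, mul_add, add_mul, mul_sub, sub_mul, two_smul]
        abel
      rw [h3, smul_smul]
      norm_num
    rw [key]
    exact hBsmul _ _ (hBadd _ hmem1 _ (hBsmul _ _ hmem2))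
  -- general case
  have hs : IsSelfAdjoint ((1/2 : ℂ) • (a + star a)) := by
    rw [_root_.IsSelfAdjoint, star_smul, star_add, star_star, add_comm]
    congr 1
    simp
  have ht : IsSelfAdjoint ((-(Complex.I)/2 : ℂ) • (a - star a)) := by
    rw [_root_.IsSelfAdjoint, star_smul, star_sub, star_star]
    rw [show star (-(Complex.I)/2 : ℂ) = (Complex.I/2 : ℂ) by simp [Complex.ext_iff]]
    rw [show (star a - a) = (-1 : ℂ) • (a - star a) by simp]
    rw [smul_smul]
    congr 1
    ring
  have key : x * a * x = x * ((1/2 : ℂ) • (a + star a)) * x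
      + Complex.I • (x * ((-(Complex.I)/2 : ℂ) • (a - star a)) * x) := by
    rw [mul_smul_comm, smul_mul_assoc, mul_smul_comm, smul_mul_assoc, smul_smul]
    rw [show (Complex.I * (-(Complex.I)/2)) = (1/2 : ℂ) from by
      rw [show (-(Complex.I)/2 : ℂ) = -(Complex.I) * (1/2 : ℂ) from by ring, ← mul_assoc,
        mul_neg, Complex.I_mul_I]
      norm_num]
    rw [← smul_add]
    have h4 : x * (a + star a) * x + x * (a - star a) * x = (2 : ℂ) • (x * a * x) := by
      rw [mul_add, add_mul, mul_sub, sub_mul, two_smul]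
      abel
    rw [h4, smul_smul]
    norm_num
  rw [key]
  exact hBadd _ (hsa _ hs) _ (hBsmul _ _ (hsa _ ht))

/-- The hereditary subalgebra generated by a nonnegative element of a hereditary
subalgebra is contained in it. -/
lemma herSub_subset {B : Set A} (hB : IsHerSub B) {x : A} (hx : x ∈ B) (hx0 : 0 ≤ x) :
    herSub x ⊆ B := by
  refine closure_minimal ?_ hB.1
  rintro y ⟨a, rfl⟩
  exact conj_mem hB hx hx0 a

end Aux

/-- If a finite group action on an infinite dimensional simple separable unital
C*-algebra has the tracial Rokhlin property, then either the algebra has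
Property (SP) or the action has the strict Rokhlin property. -/
theorem propertySP_or_strictRokhlin (A : Type*) [CStarAlgebra A]
    [PartialOrder A] [StarOrderedRing A] [TopologicalSpace.SeparableSpace A]
    (hinfdim : ¬ FiniteDimensional ℂ A) (hsimple : IsSimpleCStarAlgebra A)
    (G : Type*) [Group G] [Fintype G]
    (α : G → A ≃⋆ₐ[ℂ] A) (hα : ∀ g h : G, ∀ a : A, α (g * h) a = α g (α h a))
    (hTR : TracialRokhlin α) :
    PropertySP A ∨ StrictRokhlin α := by
  by_cases hSP : PropertySP A
  · exact Or.inl hSP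
  right
  rw [PropertySP] at hSP
  push_neg at hSP
  obtain ⟨B, hB, ⟨b, hbB, hb0⟩, hnoproj⟩ := hSP
  -- build a positive norm-one element of B
  set r : ℝ := ‖b‖⁻¹ with hr
  have hbnorm : ‖b‖ ≠ 0 := norm_ne_zero_iff.mpr hb0
  set x : A := star ((r : ℂ) • b) * ((r : ℂ) • b) with hxdef
  have hxB : x ∈ B := by
    have h1 : (r : ℂ) • b ∈ B := hB.2.2.2.2.1 _ _ hbB
    exact hB.2.2.2.1 _ (hB.2.2.2.2.2.1 _ h1) _ h1
  have hx0 : 0 ≤ x := star_mul_self_nonneg _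
  have hxnorm : ‖x‖ = 1 := by
    rw [hxdef, CStarRing.norm_star_mul_self, norm_smul]
    simp only [Complex.norm_real, Real.norm_eq_abs, hr, abs_inv, abs_norm]
    field_simp
  intro F ε hε
  obtain ⟨e, he1, he2, he3, he4, ⟨q, hqproj, hqher, v, hv1, hv2⟩, _⟩ :=
    hTR F ε hε x hx0 hxnorm
  refine ⟨e, he1, he2, he3, he4, ?_⟩
  have hqB : q ∈ B := herSub_subset hB hxB hx0 hqher
  have hq0 : q = 0 := hnoproj q hqB hqproj
  subst hq0
  have hv0 : v = 0 := by
    have : ‖v‖ * ‖v‖ = 0 := by rw [← CStarRing.norm_self_mul_star, hv2, norm_zero]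
    have := mul_self_eq_zero.mp this
    exact norm_eq_zero.mp this
  subst hv0
  rw [star_zero, mul_zero] at hv1
  have h5 : (1 : A) - ∑ g : G, e g = 0 := hv1.symm
  rw [sub_eq_zero] at h5
  exact h5.symm
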